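/- Let ℋ be finite-dimensional and ρ a density operator on ℋ. Define, for F ∈ CL_QM and 𝒜 ∈ 𝔄, P_ρ(F | F_𝒜) := Σ_{P : (𝒜,P) ∈ F} Tr(ρP), the sum over the atoms P of L(𝒜) with (𝒜,P) ∈ F. Then for every fixed 𝒜 ∈ 𝔄 the map F ↦ P_ρ(F | F_𝒜) is a probability measure on (S!_QM, CL_QM): it takes values in [0,1], assigns 1 to F_𝒜 (and to S!_QM), and is countably additive on disjoint families. -/

import Mathlib

open scoped ENNReal

variable (H : Type*) [NormedAddCommGroup H] [InnerProductSpace ℂ H] [CompleteSpace H]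

/-- An orthogonal projection on the Hilbert space `H`, i.e. an element of `L(ℋ)`. -/
def IsProj (P : H →L[ℂ] H) : Prop := IsIdempotentElem P ∧ IsSelfAdjoint P

/-- The lattice order on projections: `P ≤ Q` iff `P * Q = P`. -/
def pleq (P Q : H →L[ℂ] H) : Prop := P * Q = P

/-- An abelian (commutative) von Neumann algebra. -/
def IsAbelianAlg (A : VonNeumannAlgebra H) : Prop :=
  ∀ x ∈ A, ∀ y ∈ A, x * y = y * x
/-- The collection `𝔄` of abelian von Neumann subalgebras of `B(H)`. -/
def AbAlg := {A : VonNeumannAlgebra H // IsAbelianAlg H A}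
/-- `P` is an atom of the Boolean lattice `L(𝒜)`, i.e. `P ∈ L₀(𝒜)`. -/
def IsAtomIn (A : VonNeumannAlgebra H) (P : H →L[ℂ] H) : Prop :=
  P ∈ A ∧ IsProj H P ∧ P ≠ 0 ∧
    ∀ Q : H →L[ℂ] H, Q ∈ A → IsProj H Q → pleq H Q P → Q = 0 ∨ Q = P

/-- The set `S!_QM` of pairs `(𝒜, P)` with `𝒜 ∈ 𝔄` and `P ∈ L₀(𝒜)` an atom of `L(𝒜)`. -/
def SBang := {x : AbAlg H × (H →L[ℂ] H) // IsAtomIn H x.1.1 x.2}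
/-- The condition `F_𝒜 = {(𝒜',P') ∈ S!_QM : 𝒜' ⊇ 𝒜}` expressing that `𝒜` is measured. -/
def Fcond (A : AbAlg H) : Set (SBang H) := {x | A.1 ≤ x.1.1.1}
/-- The Born weight `Tr(ρP)` (as a real number). -/
noncomputable def bornWeight (ρ P : H →L[ℂ] H) : ℝ :=
  (LinearMap.trace ℂ H ↑(ρ * P)).re

/-- A density operator: a positive operator of trace one. -/
def IsDensityOp (ρ : H →L[ℂ] H) : Prop :=
  ρ.IsPositive ∧ LinearMap.trace ℂ H ↑ρ = 1
/-- The conditional probability `P_ρ(F | F_𝒜) = Σ_{P : (𝒜,P) ∈ F} Tr(ρP)`. -/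
noncomputable def Pr (ρ : H →L[ℂ] H) (F : Set (SBang H)) (A : AbAlg H) : ℝ :=
  ∑' x : {x : SBang H // x ∈ F ∧ x.1.1 = A}, bornWeight H ρ x.1.1.2

section Aux

set_option linter.unusedSectionVars false

open scoped Classical

variable {H}

/-- The rank of an operator. -/
noncomputable def nrank (P : H →L[ℂ] H) : ℕ :=
  Module.finrank ℂ (LinearMap.range (P : H →ₗ[ℂ] H))

lemma trace_re_nonneg [FiniteDimensional ℂ H] {T : H →L[ℂ] H} (hT : T.IsPositive) :
    0 ≤ (LinearMap.trace ℂ H ↑T).re := by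
  let b := stdOrthonormalBasis ℂ H
  rw [LinearMap.trace_eq_matrix_trace ℂ b.toBasis, Matrix.trace]
  simp only [Matrix.diag, LinearMap.toMatrix_apply, OrthonormalBasis.coe_toBasis,
    OrthonormalBasis.coe_toBasis_repr_apply, OrthonormalBasis.repr_apply_apply,
    ContinuousLinearMap.coe_coe]
  rw [Complex.re_sum]
  exact Finset.sum_nonneg fun i _ => (Complex.le_def.mp (hT.inner_nonneg_right (b i))).1

lemma clm_coe_mul (f g : H →L[ℂ] H) :
    ((f * g : H →L[ℂ] H) : H →ₗ[ℂ] H) = (f : H →ₗ[ℂ] H) * g := rfl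

lemma born_nonneg [FiniteDimensional ℂ H] {ρ P : H →L[ℂ] H} (hρ : ρ.IsPositive)
    (hP1 : IsIdempotentElem P) (hP2 : IsSelfAdjoint P) :
    0 ≤ bornWeight H ρ P := by
  have h1 : ρ * P = (ρ * P) * P := by rw [mul_assoc, hP1]
  have h2 : LinearMap.trace ℂ H ↑(ρ * P) = LinearMap.trace ℂ H ↑(P * (ρ * P)) := by
    conv_lhs => rw [h1]
    simp only [clm_coe_mul]
    exact LinearMap.trace_mul_comm ℂ _ _
  rw [bornWeight, h2]
  have hpos : (P * (ρ * P)).IsPositive := by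
    have := hρ.adjoint_conj P
    rwa [hP2.adjoint_eq] at this
  exact trace_re_nonneg hpos

lemma mem_range_idem {P : H →L[ℂ] H} (hP : IsIdempotentElem P) {x : H} :
    x ∈ LinearMap.range (P : H →ₗ[ℂ] H) ↔ P x = x := by
  constructor
  · rintro ⟨y, rfl⟩
    have := congrFun (congrArg (fun (f : H →L[ℂ] H) => (f : H → H)) hP) y
    simpa [ContinuousLinearMap.mul_apply] using this
  · intro h; exact ⟨x, h⟩

lemma range_le_of_comp {P Q : H →L[ℂ] H} (h : Q * P = P) :
    LinearMap.range (P : H →ₗ[ℂ] H) ≤ LinearMap.range (Q : H →ₗ[ℂ] H) := by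
  rintro x ⟨y, rfl⟩
  refine ⟨P y, ?_⟩
  have := congrFun (congrArg (fun (f : H →L[ℂ] H) => (f : H → H)) h) y
  simpa [ContinuousLinearMap.mul_apply] using this

lemma nrank_pos [FiniteDimensional ℂ H] {P : H →L[ℂ] H} (hP : P ≠ 0) : 0 < nrank P := by
  rw [Nat.pos_iff_ne_zero]
  intro h
  rw [nrank, Submodule.finrank_eq_zero] at h
  rw [LinearMap.range_eq_bot] at h
  exact hP (by ext x; exact congrFun (congrArg DFunLike.coe h) x)

lemma idem_sub {Q R : H →L[ℂ] H} (hQ : IsIdempotentElem Q) (hR : IsIdempotentElem R)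
    (hRQ : R * Q = R) (hQR : Q * R = R) : IsIdempotentElem (Q - R) := by
  have : (Q - R) * (Q - R) = Q * Q - Q * R - (R * Q - R * R) := by noncomm_ring
  rw [IsIdempotentElem, this, hQ, hQR, hRQ, hR]
  abel

lemma rank_split [FiniteDimensional ℂ H] {Q R : H →L[ℂ] H}
    (hQ : IsIdempotentElem Q) (hR : IsIdempotentElem R)
    (hRQ : R * Q = R) (hQR : Q * R = R) :
    nrank Q = nrank R + nrank (Q - R) := by
  have hQR' : Q * (Q - R) = Q - R := by
    rw [mul_sub, hQ, hQR]
  have hR' : IsIdempotentElem (Q - R) := idem_sub hQ hR hRQ hQR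
  have hinf : LinearMap.range (R : H →ₗ[ℂ] H) ⊓
      LinearMap.range ((Q - R : H →L[ℂ] H) : H →ₗ[ℂ] H) = ⊥ := by
    rw [Submodule.eq_bot_iff]
    intro x hx
    have h1 := (mem_range_idem hR).mp hx.1
    have h2 := (mem_range_idem hR').mp hx.2
    have hR0 : R * (Q - R) = 0 := by rw [mul_sub, hRQ, hR]; abel
    calc x = R x := h1.symm
    _ = R ((Q - R) x) := by rw [h2]
    _ = ((R * (Q - R) : H →L[ℂ] H) : H → H) x := by simp [ContinuousLinearMap.mul_apply]
    _ = 0 := by rw [hR0]; simp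
  have hsup : LinearMap.range (R : H →ₗ[ℂ] H) ⊔
      LinearMap.range ((Q - R : H →L[ℂ] H) : H →ₗ[ℂ] H) =
      LinearMap.range (Q : H →ₗ[ℂ] H) := by
    apply le_antisymm
    · exact sup_le (range_le_of_comp hQR) (range_le_of_comp hQR')
    · rintro x ⟨y, rfl⟩
      have : (Q : H → H) y = R y + (Q - R) y := by simp
      rw [ContinuousLinearMap.coe_coe, this]
      exact Submodule.add_mem_sup ⟨y, rfl⟩ ⟨y, rfl⟩
  have := Submodule.finrank_sup_add_finrank_inf_eq
    (LinearMap.range (R : H →ₗ[ℂ] H)) (LinearMap.range ((Q - R : H →L[ℂ] H) : H →ₗ[ℂ] H))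
  rw [hinf, hsup] at this
  have hcoe : ((Q - R : H →L[ℂ] H) : H →ₗ[ℂ] H) = (Q : H →ₗ[ℂ] H) - R := rfl
  simp only [nrank, hcoe, finrank_bot, add_zero] at this ⊢
  omega

lemma pleq_trans {P R Q : H →L[ℂ] H} (h1 : pleq H P R) (h2 : pleq H R Q) : pleq H P Q := by
  unfold pleq at *
  calc P * Q = P * R * Q := by rw [h1]
  _ = P * (R * Q) := by rw [mul_assoc]
  _ = P * R := by rw [h2]
  _ = P := h1

lemma atoms_decompose [FiniteDimensional ℂ H] (A : VonNeumannAlgebra H) :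
    ∀ n (Q : H →L[ℂ] H), nrank Q = n → Q ∈ A → IsProj H Q →
    ∃ s : Finset (H →L[ℂ] H), (∀ P ∈ s, IsAtomIn H A P ∧ pleq H P Q) ∧ ∑ P ∈ s, P = Q := by
  intro n
  induction n using Nat.strong_induction_on with
  | _ n ih =>
    intro Q hrank hQA hQp
    by_cases hQ0 : Q = 0
    · exact ⟨∅, by simp, by simp [hQ0]⟩
    by_cases hQa : IsAtomIn H A Q
    · refine ⟨{Q}, ?_, by simp⟩
      intro P hP
      rw [Finset.mem_singleton] at hP
      subst hP
      exact ⟨hQa, hQp.1⟩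
    · have hex : ∃ R, R ∈ A ∧ IsProj H R ∧ pleq H R Q ∧ R ≠ 0 ∧ R ≠ Q := by
        by_contra hc
        push_neg at hc
        refine hQa ⟨hQA, hQp, hQ0, fun R h1 h2 h3 => ?_⟩
        by_cases h : R = 0
        · exact Or.inl h
        · exact Or.inr (hc R h1 h2 h3 h)
      obtain ⟨R, hRA, hRp, hRQ, hR0, hRneQ⟩ := hex
      have hQRcomp : Q * R = R := by
        have h := congrArg star hRQ
        rwa [star_mul, hRp.2.star_eq, hQp.2.star_eq] at h
      have hsplit := rank_split hQp.1 hRp.1 hRQ hQRcomp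
      have hQ'0 : Q - R ≠ 0 := sub_ne_zero.mpr (Ne.symm hRneQ)
      have hrankR : nrank R < n := by
        have := nrank_pos hQ'0; omega
      have hrankQ' : nrank (Q - R) < n := by
        have := nrank_pos hR0; omega
      have hQ'p : IsProj H (Q - R) := ⟨idem_sub hQp.1 hRp.1 hRQ hQRcomp, hQp.2.sub hRp.2⟩
      have hQ'A : Q - R ∈ A := sub_mem hQA hRA
      obtain ⟨s₁, hs₁, hsum₁⟩ := ih (nrank R) hrankR R rfl hRA hRp
      obtain ⟨s₂, hs₂, hsum₂⟩ := ih (nrank (Q - R)) hrankQ' (Q - R) rfl hQ'A hQ'p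
      have hdisj : Disjoint s₁ s₂ := by
        rw [Finset.disjoint_left]
        intro P h1 h2
        obtain ⟨ha1, hl1⟩ := hs₁ P h1
        obtain ⟨ha2, hl2⟩ := hs₂ P h2
        have hPQ : P * Q = P := pleq_trans hl1 hRQ
        have : P = 0 := by
          have h' : P * (Q - R) = P := hl2
          rw [mul_sub, hPQ, hl1] at h'
          simpa using h'.symm
        exact ha1.2.2.1 this
      refine ⟨s₁ ∪ s₂, ?_, ?_⟩
      · intro P hP
        rcases Finset.mem_union.mp hP with h | h
        · exact ⟨(hs₁ P h).1, pleq_trans (hs₁ P h).2 hRQ⟩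
        · exact ⟨(hs₂ P h).1, pleq_trans (hs₂ P h).2 (show pleq H (Q - R) Q by
            unfold pleq; rw [sub_mul, hQp.1, hRQ])⟩
      · rw [Finset.sum_union hdisj, hsum₁, hsum₂]; abel

lemma atom_mul_atom_ne {A : VonNeumannAlgebra H} (hA : IsAbelianAlg H A)
    {P Q : H →L[ℂ] H} (hP : IsAtomIn H A P) (hQ : IsAtomIn H A Q) (hne : P ≠ Q) :
    P * Q = 0 := by
  have hcomm : P * Q = Q * P := hA P hP.1 Q hQ.1
  have hmem : P * Q ∈ A := mul_mem hP.1 hQ.1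
  have hidem : IsIdempotentElem (P * Q) := by
    rw [IsIdempotentElem]
    calc P * Q * (P * Q) = P * (Q * P) * Q := by noncomm_ring
    _ = P * (P * Q) * Q := by rw [← hcomm]
    _ = (P * P) * (Q * Q) := by noncomm_ring
    _ = P * Q := by rw [hP.2.1.1, hQ.2.1.1]
  have hsa : IsSelfAdjoint (P * Q) := by
    rw [IsSelfAdjoint, star_mul, hP.2.1.2.star_eq, hQ.2.1.2.star_eq, ← hcomm]
  have hleQ : pleq H (P * Q) Q := by
    unfold pleq; rw [mul_assoc, hQ.2.1.1]
  have hleP : pleq H (P * Q) P := by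
    unfold pleq
    calc P * Q * P = P * (Q * P) := by rw [mul_assoc]
    _ = P * (P * Q) := by rw [← hcomm]
    _ = (P * P) * Q := by rw [mul_assoc]
    _ = P * Q := by rw [hP.2.1.1]
  rcases hQ.2.2.2 _ hmem ⟨hidem, hsa⟩ hleQ with h | h
  · exact h
  · rcases hP.2.2.2 _ hmem ⟨hidem, hsa⟩ hleP with h' | h'
    · exact h'
    · exact absurd (h'.symm.trans h) hne

lemma atoms_finset [FiniteDimensional ℂ H] (A : VonNeumannAlgebra H) (hA : IsAbelianAlg H A) :
    ∃ s : Finset (H →L[ℂ] H), (∀ P, P ∈ s ↔ IsAtomIn H A P) ∧ ∑ P ∈ s, P = 1 := by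
  obtain ⟨s, hs, hsum⟩ := atoms_decompose A (nrank 1) 1 rfl (one_mem A)
    ⟨by simp [IsIdempotentElem], IsSelfAdjoint.one _⟩
  refine ⟨s, fun P => ⟨fun h => (hs P h).1, fun hatom => ?_⟩, hsum⟩
  by_contra hPs
  have h0 : P * (1 : H →L[ℂ] H) = 0 := by
    rw [← hsum, Finset.mul_sum]
    apply Finset.sum_eq_zero
    intro Q hQ
    exact atom_mul_atom_ne hA hatom (hs Q hQ).1 (fun h => hPs (h ▸ hQ))
  rw [mul_one] at h0
  exact hatom.2.2.1 h0

lemma Pr_eq [FiniteDimensional ℂ H] (ρ : H →L[ℂ] H) (A : AbAlg H)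
    {s : Finset (H →L[ℂ] H)} (hs : ∀ P, P ∈ s ↔ IsAtomIn H A.1 P)
    (F : Set (SBang H)) :
    Pr H ρ F A = ∑ y ∈ s.attach,
      if (⟨⟨A, y.1⟩, (hs y.1).mp y.2⟩ : SBang H) ∈ F then bornWeight H ρ y.1 else 0 := by
  rw [← Finset.sum_filter]
  rw [← Finset.tsum_subtype
    (s.attach.filter (fun y => (⟨⟨A, y.1⟩, (hs y.1).mp y.2⟩ : SBang H) ∈ F))
    (fun y => bornWeight H ρ y.1)]
  have hxeq : ∀ (x : {x : SBang H // x ∈ F ∧ x.1.1 = A}) (h),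
      (⟨⟨A, x.1.1.2⟩, h⟩ : SBang H) = x.1 :=
    fun x h => Subtype.ext (Prod.ext x.2.2.symm rfl)
  let e : {y : {P // P ∈ s} //
      y ∈ s.attach.filter (fun y => (⟨⟨A, y.1⟩, (hs y.1).mp y.2⟩ : SBang H) ∈ F)} ≃
      {x : SBang H // x ∈ F ∧ x.1.1 = A} :=
  { toFun := fun y => ⟨⟨⟨A, y.1.1⟩, (hs y.1.1).mp y.1.2⟩,
      (Finset.mem_filter.mp y.2).2, rfl⟩
    invFun := fun x => ⟨⟨x.1.1.2, (hs x.1.1.2).mpr (by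
        have h := x.1.2
        rw [x.2.2] at h
        exact h)⟩, by
      rw [Finset.mem_filter]
      exact ⟨Finset.mem_attach _ _, by rw [hxeq x]; exact x.2.1⟩⟩
    left_inv := fun y => Subtype.ext (Subtype.ext rfl)
    right_inv := fun x => Subtype.ext (hxeq x _) }
  exact (Equiv.tsum_eq e (fun x => bornWeight H ρ x.1.1.2)).symm

end Aux

/-- (`ℋ` finite-dimensional, `ρ` a density operator.) For each fixed
`𝒜 ∈ 𝔄`, the map `F ↦ P_ρ(F | F_𝒜) = Σ_{P : (𝒜,P) ∈ F} Tr(ρP)` is a probability measure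
on `(S!_QM, CL_QM)`: it takes values in `[0,1]`, assigns `1` to `F_𝒜` and to `S!_QM`,
and is countably additive on disjoint families. -/
theorem pr_probability_measure [FiniteDimensional ℂ H] (ρ : H →L[ℂ] H)
    (hρ : IsDensityOp H ρ) (A : AbAlg H) :
    (∀ F : Set (SBang H), 0 ≤ Pr H ρ F A ∧ Pr H ρ F A ≤ 1) ∧
    Pr H ρ (Fcond H A) A = 1 ∧
    Pr H ρ Set.univ A = 1 ∧
    (∀ f : ℕ → Set (SBang H), Pairwise (fun i j => Disjoint (f i) (f j)) →
      Pr H ρ (⋃ i, f i) A = ∑' i, Pr H ρ (f i) A) := by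
  classical
  obtain ⟨s, hs, hsum⟩ := atoms_finset A.1 A.2
  have hw : ∀ P ∈ s, 0 ≤ bornWeight H ρ P := fun P hP =>
    born_nonneg hρ.1 ((hs P).mp hP).2.1.1 ((hs P).mp hP).2.1.2
  have htotal : ∑ P ∈ s, bornWeight H ρ P = 1 := by
    have h1 : ∑ P ∈ s, bornWeight H ρ P = (LinearMap.trace ℂ H ↑(ρ * ∑ P ∈ s, P)).re := by
      rw [Finset.mul_sum]
      rw [show ((∑ P ∈ s, ρ * P : H →L[ℂ] H) : H →ₗ[ℂ] H) = ∑ P ∈ s, ((ρ * P : H →L[ℂ] H) : H →ₗ[ℂ] H)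
        from ContinuousLinearMap.coe_sum s _]
      rw [map_sum, Complex.re_sum]
      rfl
    rw [h1, hsum, mul_one, hρ.2]
    simp
  have hattach : ∑ y ∈ s.attach, bornWeight H ρ y.1 = 1 := by
    rw [Finset.sum_attach s (fun P => bornWeight H ρ P)]; exact htotal
  have hwa : ∀ y : {P // P ∈ s}, 0 ≤ bornWeight H ρ y.1 := fun y => hw y.1 y.2
  refine ⟨?_, ?_, ?_, ?_⟩
  · intro F
    rw [Pr_eq ρ A hs F]
    constructor
    · apply Finset.sum_nonneg
      intro y _
      split
      · exact hwa y
      · exact le_rfl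
    · calc ∑ y ∈ s.attach, (if (⟨⟨A, y.1⟩, (hs y.1).mp y.2⟩ : SBang H) ∈ F
            then bornWeight H ρ y.1 else 0)
          ≤ ∑ y ∈ s.attach, bornWeight H ρ y.1 := by
            apply Finset.sum_le_sum
            intro y _
            split
            · exact le_refl _
            · exact hwa y
      _ = 1 := hattach
  · rw [Pr_eq ρ A hs (Fcond H A)]
    have : ∀ y ∈ s.attach, (if (⟨⟨A, y.1⟩, (hs y.1).mp y.2⟩ : SBang H) ∈ Fcond H A
        then bornWeight H ρ y.1 else 0) = bornWeight H ρ y.1 := by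
      intro y _
      rw [if_pos]
      exact le_refl A.1
    rw [Finset.sum_congr rfl this]
    exact hattach
  · rw [Pr_eq ρ A hs Set.univ]
    exact (Finset.sum_congr rfl (fun y _ => if_pos (Set.mem_univ _))).trans hattach
  · intro f hf
    have hPri : ∀ F, Pr H ρ F A = ∑ y ∈ s.attach,
        (if (⟨⟨A, y.1⟩, (hs y.1).mp y.2⟩ : SBang H) ∈ F then bornWeight H ρ y.1 else 0) :=
      fun F => Pr_eq ρ A hs F
    rw [hPri]
    have hsummable : ∀ y : {P // P ∈ s}, Summable (fun i =>
        if (⟨⟨A, y.1⟩, (hs y.1).mp y.2⟩ : SBang H) ∈ f i then bornWeight H ρ y.1 else 0) := by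
      intro y
      by_cases h : (⟨⟨A, y.1⟩, (hs y.1).mp y.2⟩ : SBang H) ∈ ⋃ i, f i
      · obtain ⟨i₀, hi₀⟩ := Set.mem_iUnion.mp h
        apply summable_of_ne_finset_zero (s := {i₀})
        intro i hi
        rw [Finset.mem_singleton] at hi
        rw [if_neg]
        intro hmem
        exact (hf hi).le_bot ⟨hmem, hi₀⟩
      · apply summable_of_ne_finset_zero (s := ∅)
        intro i _
        rw [if_neg]
        intro hmem
        exact h (Set.mem_iUnion.mpr ⟨i, hmem⟩)
    have hswap : ∑' i, Pr H ρ (f i) A = ∑' i, ∑ y ∈ s.attach,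
        (if (⟨⟨A, y.1⟩, (hs y.1).mp y.2⟩ : SBang H) ∈ f i then bornWeight H ρ y.1 else 0) := by
      congr 1
      ext i
      exact hPri (f i)
    rw [hswap, Summable.tsum_finsetSum (fun y _ => hsummable y)]
    apply Finset.sum_congr rfl
    intro y _
    by_cases h : (⟨⟨A, y.1⟩, (hs y.1).mp y.2⟩ : SBang H) ∈ ⋃ i, f i
    · rw [if_pos h]
      obtain ⟨i₀, hi₀⟩ := Set.mem_iUnion.mp h
      rw [tsum_eq_single i₀]
      · exact (if_pos hi₀).symm
      · intro i hi
        rw [if_neg]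
        intro hmem
        exact (hf hi).le_bot ⟨hmem, hi₀⟩
    · rw [if_neg h]
      have : ∀ i, (if (⟨⟨A, y.1⟩, (hs y.1).mp y.2⟩ : SBang H) ∈ f i
          then bornWeight H ρ y.1 else 0) = 0 := by
        intro i
        rw [if_neg]
        intro hmem
        exact h (Set.mem_iUnion.mpr ⟨i, hmem⟩)
      simp only [this, tsum_zero]
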